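/- Let P₁, P₂, τ₁, τ₂ > 0 satisfy τ₁·(γ(P₁+P₂) − γ(P₁)) < τ₂·γ(P₁) and τ₂·(γ(P₁+P₂) − γ(P₂)) < τ₁·γ(P₂) (Case II), and set w₁ = (γ(P₁+P₂) − γ(P₂))/γ(P₁+P₂), C = ((τ₁/(τ₁+τ₂))·γ(P₁+P₂), (τ₂/(τ₁+τ₂))·γ(P₁+P₂)), B = (γ(P₁), γ(P₁+P₂) − γ(P₁)). Let D₁(r₁, r₂) = (1−w)·τ₂/γ(P₂) + τ₁·(γ(P₂) − (1−w)·r₂)/(γ(P₂)·r₁). Then for every (r₁, r₂) ∈ C₁ with r₁ > 0 and τ₁·r₂ ≤ τ₂·r₁: if w ∈ [0, w₁] then D₁(C) ≤ D₁(r₁, r₂), and if w ∈ [w₁, 1] then D₁(B) ≤ D₁(r₁, r₂). -/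

import Mathlib

/-- γ(x) = (1/2)·log₂(1+x). -/
noncomputable def gam (x : ℝ) : ℝ := (1/2) * Real.logb 2 (1 + x)

/-- The standard two-user Gaussian MAC capacity region. -/
def C1 (P₁ P₂ : ℝ) : Set (ℝ × ℝ) :=
  {r : ℝ × ℝ | 0 ≤ r.1 ∧ r.1 ≤ gam P₁ ∧ 0 ≤ r.2 ∧ r.2 ≤ gam P₂ ∧
    r.1 + r.2 ≤ gam (P₁ + P₂)}

/-- D₁(r₁, r₂) = (1−w)·τ₂/γ(P₂) + τ₁·(γ(P₂) − (1−w)·r₂)/(γ(P₂)·r₁). -/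
noncomputable def D1 (w τ₁ τ₂ P₂ r₁ r₂ : ℝ) : ℝ :=
  (1 - w) * τ₂ / gam P₂ + τ₁ * (gam P₂ - (1 - w) * r₂) / (gam P₂ * r₁)

lemma gam_pos {x : ℝ} (hx : 0 < x) : 0 < gam x := by
  have := Real.logb_pos (by norm_num : (1:ℝ) < 2) (by linarith : (1:ℝ) < 1 + x)
  unfold gam; linarith

lemma gam_lt_gam {x y : ℝ} (hx : 0 ≤ x) (hxy : x < y) : gam x < gam y := by
  have := Real.logb_lt_logb (by norm_num : (1:ℝ) < 2)
    (by linarith : (0:ℝ) < 1 + x) (by linarith : 1 + x < 1 + y)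
  unfold gam; linarith

lemma key1 (τ₁ τ₂ g2 g12 s r₁ r₂ : ℝ) (hτ₁ : 0 < τ₁) (hτ₂ : 0 < τ₂)
    (hg2 : 0 < g2) (hg12 : 0 < g12) (hr₁ : 0 < r₁)
    (hs : g2 ≤ s * g12) (h5 : r₁ + r₂ ≤ g12) (hτr : τ₁ * r₂ ≤ τ₂ * r₁) :
    τ₁ * (g2 - s * (τ₂ / (τ₁ + τ₂) * g12)) / (g2 * (τ₁ / (τ₁ + τ₂) * g12)) ≤
      τ₁ * (g2 - s * r₂) / (g2 * r₁) := by
  have hτ : 0 < τ₁ + τ₂ := by linarith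
  rw [div_le_div_iff₀ (by positivity) (by positivity)]
  have h1 : 0 ≤ (s * g12 - g2) * (τ₂ * r₁ - τ₁ * r₂) :=
    mul_nonneg (by linarith) (by linarith)
  have h2 : 0 ≤ g2 * τ₁ * (g12 - r₂ - r₁) :=
    mul_nonneg (by positivity) (by linarith)
  field_simp
  try rw [div_le_div_iff₀ (by positivity) (by positivity)]
  nlinarith [mul_pos hg2 hτ, mul_nonneg (mul_nonneg hg2.le hτ.le) h1,
    mul_nonneg (mul_nonneg hg2.le hτ.le) h2, mul_pos hg2 hg12]

lemma key2 (τ₁ g1 g2 g12 s r₁ r₂ : ℝ) (hτ₁ : 0 < τ₁)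
    (hg1 : 0 < g1) (hg2 : 0 < g2) (hg12 : 0 < g12) (hr₁ : 0 < r₁)
    (hs0 : 0 ≤ s) (hs : s * g12 ≤ g2) (h2 : r₁ ≤ g1) (h5 : r₁ + r₂ ≤ g12) :
    τ₁ * (g2 - s * (g12 - g1)) / (g2 * g1) ≤ τ₁ * (g2 - s * r₂) / (g2 * r₁) := by
  rw [div_le_div_iff₀ (by positivity) (by positivity)]
  have h1 : g1 * r₂ - r₁ * (g12 - g1) ≤ g12 * (g1 - r₁) := by nlinarith
  have h3 : s * (g1 * r₂ - r₁ * (g12 - g1)) ≤ g2 * (g1 - r₁) := by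
    calc s * (g1 * r₂ - r₁ * (g12 - g1)) ≤ s * (g12 * (g1 - r₁)) := by nlinarith
      _ ≤ g2 * (g1 - r₁) := by nlinarith
  have h4 : 0 ≤ g2 * (g1 - r₁) - s * (g1 * r₂ - r₁ * (g12 - g1)) := by linarith
  nlinarith [mul_nonneg (mul_nonneg hg2.le hτ₁.le) h4]

theorem stmt_5 (P₁ P₂ τ₁ τ₂ w : ℝ) (hP₁ : 0 < P₁) (hP₂ : 0 < P₂)
    (hτ₁ : 0 < τ₁) (hτ₂ : 0 < τ₂)
    (hcaseA : τ₁ * (gam (P₁ + P₂) - gam P₁) < τ₂ * gam P₁)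
    (hcaseB : τ₂ * (gam (P₁ + P₂) - gam P₂) < τ₁ * gam P₂) :
    ∀ r₁ r₂ : ℝ, (r₁, r₂) ∈ C1 P₁ P₂ → 0 < r₁ → τ₁ * r₂ ≤ τ₂ * r₁ →
      (w ∈ Set.Icc (0:ℝ) ((gam (P₁ + P₂) - gam P₂) / gam (P₁ + P₂)) →
        D1 w τ₁ τ₂ P₂ ((τ₁ / (τ₁ + τ₂)) * gam (P₁ + P₂))
          ((τ₂ / (τ₁ + τ₂)) * gam (P₁ + P₂)) ≤ D1 w τ₁ τ₂ P₂ r₁ r₂) ∧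
      (w ∈ Set.Icc ((gam (P₁ + P₂) - gam P₂) / gam (P₁ + P₂)) 1 →
        D1 w τ₁ τ₂ P₂ (gam P₁) (gam (P₁ + P₂) - gam P₁) ≤ D1 w τ₁ τ₂ P₂ r₁ r₂) := by
  have hg1 : 0 < gam P₁ := gam_pos hP₁
  have hg2 : 0 < gam P₂ := gam_pos hP₂
  have hg12 : 0 < gam (P₁ + P₂) := gam_pos (by linarith)
  have hg2lt : gam P₂ < gam (P₁ + P₂) := gam_lt_gam hP₂.le (by linarith)
  intro r₁ r₂ hmem hr₁ hτr
  obtain ⟨h1, h2, h3, h4, h5⟩ := hmem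
  simp only at h1 h2 h3 h4 h5
  constructor
  · rintro ⟨hw0, hw1⟩
    have hs : gam P₂ ≤ (1 - w) * gam (P₁ + P₂) := by
      have := (le_div_iff₀ hg12).1 hw1
      nlinarith
    have := key1 τ₁ τ₂ (gam P₂) (gam (P₁ + P₂)) (1 - w) r₁ r₂ hτ₁ hτ₂ hg2 hg12 hr₁
      hs h5 hτr
    unfold D1
    linarith [this]
  · rintro ⟨hw0, hw1⟩
    have hs0 : 0 ≤ 1 - w := by linarith
    have hs : (1 - w) * gam (P₁ + P₂) ≤ gam P₂ := by
      have := (div_le_iff₀ hg12).1 hw0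
      nlinarith
    have := key2 τ₁ (gam P₁) (gam P₂) (gam (P₁ + P₂)) (1 - w) r₁ r₂ hτ₁
      hg1 hg2 hg12 hr₁ hs0 hs h2 h5
    unfold D1
    linarith [this]
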